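/- Let u : ℕ → ℝ, (h,β) ∈ Γ(u) and k ∈ S(u,h). Then F_u(k,h,β) ≥ k. Moreover, if (h,β) is decreasing from N ∈ ℕ and k ≥ N, then for every j ∈ ℕ with j > F_u(k,h,β) one has u_j < u_k. -/
import Mathlib


open Set Filter

/-- Ω([0,1]): functions ℝ → ℝ strictly increasing and continuous on [0,1]. -/
def OmegaFun (f : ℝ → ℝ) : Prop :=
  StrictMonoOn f (Set.Icc 0 1) ∧ ContinuousOn f (Set.Icc 0 1)

/-- (h,β) ∈ Γ(u): h k ∈ Ω([0,1]), β k ∈ (0,1) and u k ≤ h k (β k ^ k) for all k. -/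
def InGamma (u : ℕ → ℝ) (h : ℕ → ℝ → ℝ) (β : ℕ → ℝ) : Prop :=
  (∀ k, OmegaFun (h k)) ∧ (∀ k, β k ∈ Set.Ioo (0:ℝ) 1) ∧ (∀ k, u k ≤ h k (β k ^ k))

/-- (h,β) is decreasing from N. -/
def DecreasingFrom (h : ℕ → ℝ → ℝ) (β : ℕ → ℝ) (N : ℕ) : Prop :=
  ∀ n, N ≤ n → (∀ x ∈ Set.Icc (0:ℝ) 1, h (n+1) x ≤ h n x) ∧ β (n+1) ≤ β n

lemma decreasing_chain (h : ℕ → ℝ → ℝ) (β : ℕ → ℝ) (N : ℕ)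
    (hd : DecreasingFrom h β N) (k j : ℕ) (hNk : N ≤ k) (hkj : k ≤ j) :
    (∀ x ∈ Set.Icc (0:ℝ) 1, h j x ≤ h k x) ∧ β j ≤ β k := by
  induction j, hkj using Nat.le_induction with
  | base => exact ⟨fun x _ => le_rfl, le_rfl⟩
  | succ n hn ih =>
    obtain ⟨h1, h2⟩ := hd n (hNk.trans hn)
    exact ⟨fun y hy => (h1 y hy).trans (ih.1 y hy), h2.trans ih.2⟩

/-- F_u(k,h,β) ≥ k, and if (h,β) is decreasing from N with k ≥ N, then
every j > F_u(k,h,β) satisfies u j < u k. -/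
theorem upper_bound_functional_ge_and_tail_lt (u : ℕ → ℝ) (h : ℕ → ℝ → ℝ) (β : ℕ → ℝ)
    (hΓ : InGamma u h β) (k : ℕ) (hk : h k 0 < u k)
    (x : ℝ) (hx : x ∈ Set.Ioc (0:ℝ) 1) (hhx : h k x = u k) :
    (k : ℝ) ≤ Real.log x / Real.log (β k) ∧
    ∀ N : ℕ, DecreasingFrom h β N → N ≤ k →
      ∀ j : ℕ, Real.log x / Real.log (β k) < (j : ℝ) → u j < u k := by
  obtain ⟨hΩ, hβ, hub⟩ := hΓ
  obtain ⟨hβ0, hβ1⟩ := hβ k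
  have hxpos : 0 < x := hx.1
  have hxmem : x ∈ Set.Icc (0:ℝ) 1 := ⟨le_of_lt hx.1, hx.2⟩
  have hβkpow : ∀ m : ℕ, (β k) ^ m ∈ Set.Icc (0:ℝ) 1 :=
    fun m => ⟨le_of_lt (pow_pos hβ0 m), pow_le_one₀ (le_of_lt hβ0) (le_of_lt hβ1)⟩
  have hlogβ : Real.log (β k) < 0 := Real.log_neg hβ0 hβ1
  -- x ≤ β k ^ k
  have hxle : x ≤ β k ^ k := by
    have := hub k
    rw [← hhx] at this
    exact ((hΩ k).1.le_iff_le hxmem (hβkpow k)).mp this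
  have hlogle : Real.log x ≤ (k : ℝ) * Real.log (β k) := by
    calc Real.log x ≤ Real.log (β k ^ k) := Real.log_le_log hxpos hxle
    _ = (k : ℝ) * Real.log (β k) := by rw [Real.log_pow]
  constructor
  · rw [le_div_iff_of_neg hlogβ]
    linarith
  · intro N hd hNk j hj
    have hkj : (k : ℝ) < (j : ℝ) := by
      have : (k : ℝ) ≤ Real.log x / Real.log (β k) := by
        rw [le_div_iff_of_neg hlogβ]; linarith
      linarith
    have hkj' : k ≤ j := le_of_lt (by exact_mod_cast hkj)
    obtain ⟨hβj0, hβj1⟩ := hβ j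
    -- β k ^ j < x
    have hlt : Real.log (β k ^ j) < Real.log x := by
      rw [Real.log_pow]
      rw [div_lt_iff_of_neg hlogβ] at hj
      linarith
    have hpowlt : β k ^ j < x :=
      (Real.log_lt_log_iff (pow_pos hβ0 j) hxpos).mp hlt
    have hchain := decreasing_chain h β N hd k j hNk hkj'
    have hβjle : β j ^ j ≤ β k ^ j :=
      pow_le_pow_left₀ (le_of_lt hβj0) hchain.2 j
    have hβjmem : β j ^ j ∈ Set.Icc (0:ℝ) 1 :=
      ⟨le_of_lt (pow_pos hβj0 j), pow_le_one₀ (le_of_lt hβj0) (le_of_lt hβj1)⟩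
    calc u j ≤ h j (β j ^ j) := hub j
      _ ≤ h k (β j ^ j) := hchain.1 _ hβjmem
      _ < h k x := (hΩ k).1 hβjmem hxmem (lt_of_le_of_lt hβjle hpowlt)
      _ = u k := hhx
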